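/- arXiv:2109.14023 — 4 statements merged into one kernel-verified Lean document; each statement's English description precedes it below -/
import Mathlib

section
/- Fix 0 < t₁ < t₂ and λ ∈ ℝ, and for μ > 0, α > 0 define G(t) = exp(λt)·(1 + α·t)^μ. Then the map α ↦ (ln G(t₁) − λ·t₁)/(ln G(t₂) − λ·t₂) = ln(1 + α·t₁)/ln(1 + α·t₂) is strictly increasing on (0, ∞). -/
open Real Set

private lemma hasDerivAt_log_affine (t α : ℝ) (h : (0:ℝ) < 1 + α * t) :
    HasDerivAt (fun α : ℝ => Real.log (1 + α * t)) (t / (1 + α * t)) α := by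
  have h1 : HasDerivAt (fun α : ℝ => 1 + α * t) t α := by
    simpa using ((hasDerivAt_id α).mul_const t).const_add 1
  have := (Real.hasDerivAt_log (ne_of_gt h)).comp α h1
  rw [div_eq_inv_mul]; exact this

private lemma psi_strictMono :
    StrictMonoOn (fun x : ℝ => (1 + x) * Real.log (1 + x) / x) (Set.Ioi 0) := by
  apply strictMonoOn_of_deriv_pos (convex_Ioi 0)
  · apply ContinuousOn.div
    · exact (continuousOn_const.add continuousOn_id).mul
        (Real.continuousOn_log.comp (continuousOn_const.add continuousOn_id)
          (fun x hx => by simp at hx ⊢; linarith))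
    · exact continuousOn_id
    · intro x hx; simp at hx; linarith
  · intro x hx
    rw [interior_Ioi] at hx
    have hx0 : 0 < x := hx
    have h1x : (0:ℝ) < 1 + x := by linarith
    have hnum : HasDerivAt (fun x : ℝ => (1 + x) * Real.log (1 + x))
        (Real.log (1 + x) + 1) x := by
      have ha : HasDerivAt (fun x : ℝ => 1 + x) 1 x := by
        simpa using (hasDerivAt_id x).const_add 1
      have hl : HasDerivAt (fun x : ℝ => Real.log (1 + x)) (1 / (1 + x)) x := by
        simpa using hasDerivAt_log_affine 1 x (by simpa using h1x)
      have := ha.mul hl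
      have hne : (1 + x) ≠ 0 := ne_of_gt h1x
      convert (show HasDerivAt (fun x : ℝ => (1 + x) * Real.log (1 + x)) _ x from this) using 1
      field_simp
    have hd : HasDerivAt (fun x : ℝ => (1 + x) * Real.log (1 + x) / x)
        (((Real.log (1 + x) + 1) * x - (1 + x) * Real.log (1 + x) * 1) / x ^ 2) x :=
      hnum.div (hasDerivAt_id x) (ne_of_gt hx0)
    rw [hd.deriv]
    have hlog : Real.log (1 + x) < x := by
      have := Real.log_lt_sub_one_of_pos h1x (by linarith)
      linarith
    have heq : (Real.log (1 + x) + 1) * x - (1 + x) * Real.log (1 + x) * 1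
        = x - Real.log (1 + x) := by ring
    rw [heq]
    apply div_pos (by linarith) (by positivity)

theorem log_ratio_strictMono (t₁ t₂ lam : ℝ) (ht₁ : 0 < t₁) (ht : t₁ < t₂) :
    (∀ μ : ℝ, 0 < μ → ∀ α : ℝ, 0 < α →
      (Real.log (Real.exp (lam * t₁) * (1 + α * t₁) ^ μ) - lam * t₁) /
        (Real.log (Real.exp (lam * t₂) * (1 + α * t₂) ^ μ) - lam * t₂) =
        Real.log (1 + α * t₁) / Real.log (1 + α * t₂)) ∧
    StrictMonoOn (fun α : ℝ => Real.log (1 + α * t₁) / Real.log (1 + α * t₂))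
      (Set.Ioi 0) := by
  constructor
  · intro μ hμ α hα
    have h1 : (0:ℝ) < 1 + α * t₁ := by positivity
    have h2 : (0:ℝ) < 1 + α * t₂ := by nlinarith
    rw [Real.log_mul (Real.exp_ne_zero _) (by positivity),
        Real.log_mul (Real.exp_ne_zero _) (ne_of_gt (Real.rpow_pos_of_pos h2 μ)),
        Real.log_exp, Real.log_exp, Real.log_rpow h1, Real.log_rpow h2]
    rw [show lam * t₁ + μ * Real.log (1 + α * t₁) - lam * t₁
        = μ * Real.log (1 + α * t₁) by ring,
      show lam * t₂ + μ * Real.log (1 + α * t₂) - lam * t₂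
        = μ * Real.log (1 + α * t₂) by ring]
    exact mul_div_mul_left _ _ (ne_of_gt hμ)
  · apply strictMonoOn_of_deriv_pos (convex_Ioi 0)
    · apply ContinuousOn.div
      · exact Real.continuousOn_log.comp
          (continuousOn_const.add (continuousOn_id.mul continuousOn_const))
          (fun α hα => by simp at hα ⊢; nlinarith)
      · exact Real.continuousOn_log.comp
          (continuousOn_const.add (continuousOn_id.mul continuousOn_const))
          (fun α hα => by simp at hα ⊢; nlinarith)
      · intro α hα
        simp only [mem_Ioi] at hα
        have h2 : (1:ℝ) < 1 + α * t₂ := by nlinarith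
        exact ne_of_gt (Real.log_pos h2)
    · intro α hα
      rw [interior_Ioi] at hα
      have hα0 : 0 < α := hα
      have h1 : (0:ℝ) < 1 + α * t₁ := by positivity
      have h2 : (0:ℝ) < 1 + α * t₂ := by nlinarith
      have hL1 : 0 < Real.log (1 + α * t₁) := Real.log_pos (by nlinarith)
      have hL2 : 0 < Real.log (1 + α * t₂) := Real.log_pos (by nlinarith)
      have hd1 := hasDerivAt_log_affine t₁ α h1
      have hd2 := hasDerivAt_log_affine t₂ α h2
      have hd := hd1.div hd2 (ne_of_gt hL2)
      rw [show deriv (fun α : ℝ => Real.log (1 + α * t₁) / Real.log (1 + α * t₂)) α = _ from hd.deriv]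
      apply div_pos _ (by positivity)
      have ht₂ : 0 < t₂ := lt_trans ht₁ ht
      have hx : (0:ℝ) < α * t₁ := by positivity
      have hy : (0:ℝ) < α * t₂ := mul_pos hα0 ht₂
      have key := psi_strictMono (mem_Ioi.mpr hx) (mem_Ioi.mpr hy) (by nlinarith)
      simp only at key
      rw [div_lt_div_iff₀ hx hy] at key
      rw [sub_pos, ← mul_div_assoc, div_mul_eq_mul_div, div_lt_div_iff₀ h2 h1]
      nlinarith [key, hα0]
end

section
/- For a > 0 and r ≥ 0, let R(τ) = ∫_ℝ exp(−a(τ² + μ²)) dμ = √(π/a)·exp(−a·τ²) be the line-integral (Radon) transform of the radial Gaussian g(x) = exp(−a|x|²) on ℝ². Then the Abel-type inversion formula holds: −(1/π)·∫_r^∞ R'(τ)/√(τ² − r²) dτ = exp(−a·r²) = g at radius r. -/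
open MeasureTheory

theorem abel_inversion_gaussian (a : ℝ) (ha : 0 < a) (r : ℝ) (hr : 0 ≤ r)
    (R : ℝ → ℝ) (hR : ∀ τ, R τ = Real.sqrt (Real.pi / a) * Real.exp (-a * τ ^ 2)) :
    (∀ τ : ℝ, ∫ μ : ℝ, Real.exp (-a * (τ ^ 2 + μ ^ 2)) = R τ) ∧
    -(1 / Real.pi) * ∫ τ in Set.Ioi r, deriv R τ / Real.sqrt (τ ^ 2 - r ^ 2) =
      Real.exp (-a * r ^ 2) := by
  have hRfun : R = fun τ => Real.sqrt (Real.pi / a) * Real.exp (-a * τ ^ 2) := funext hR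
  set c := Real.sqrt (Real.pi / a) with hc
  have hc2 : c ^ 2 = Real.pi / a := Real.sq_sqrt (by positivity)
  constructor
  · intro τ
    have h : ∀ μ : ℝ, Real.exp (-a * (τ ^ 2 + μ ^ 2))
        = Real.exp (-a * τ ^ 2) * Real.exp (-a * μ ^ 2) := by
      intro μ; rw [← Real.exp_add]; ring_nf
    simp_rw [h]
    rw [integral_const_mul, integral_gaussian, hR]
    ring
  · have hderiv : ∀ τ, deriv R τ = c * (-2 * a * τ * Real.exp (-a * τ ^ 2)) := by
      intro τ
      rw [hRfun]
      have h1 : HasDerivAt (fun τ : ℝ => -a * τ ^ 2) (-a * (2 * τ)) τ := by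
        have := (hasDerivAt_pow 2 τ).const_mul (-a)
        refine this.congr_deriv ?_
        push_cast; ring
      have h2 : HasDerivAt (fun τ : ℝ => c * Real.exp (-a * τ ^ 2))
          (c * (Real.exp (-a * τ ^ 2) * (-a * (2 * τ)))) τ := h1.exp.const_mul c
      rw [h2.deriv]; ring
    set φ : ℝ → ℝ := fun u => Real.sqrt (u ^ 2 + r ^ 2) with hφ
    have himg : φ '' Set.Ioi 0 = Set.Ioi r := by
      ext x
      constructor
      · rintro ⟨u, hu, rfl⟩
        simp only [Set.mem_Ioi] at *
        calc r = Real.sqrt (r ^ 2) := (Real.sqrt_sq hr).symm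
          _ < Real.sqrt (u ^ 2 + r ^ 2) := Real.sqrt_lt_sqrt (by positivity) (by nlinarith)
      · intro hx
        have hx' : r < x := hx
        have hx0 : 0 < x := lt_of_le_of_lt hr hx'
        refine ⟨Real.sqrt (x ^ 2 - r ^ 2), ?_, ?_⟩
        · exact Set.mem_Ioi.mpr (Real.sqrt_pos.mpr (by nlinarith))
        · show Real.sqrt (Real.sqrt (x ^ 2 - r ^ 2) ^ 2 + r ^ 2) = x
          rw [Real.sq_sqrt (by nlinarith)]
          rw [sub_add_cancel, Real.sqrt_sq hx0.le]
    have hφ' : ∀ u ∈ Set.Ioi (0:ℝ), HasDerivWithinAt φ (u / Real.sqrt (u ^ 2 + r ^ 2))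
        (Set.Ioi 0) u := by
      intro u hu
      have hu0 : 0 < u := hu
      have hne : u ^ 2 + r ^ 2 ≠ 0 := by positivity
      have hinner : HasDerivAt (fun u : ℝ => u ^ 2 + r ^ 2) (2 * u) u := by
        have := (hasDerivAt_pow 2 u).add_const (r ^ 2)
        refine this.congr_deriv ?_
        push_cast; ring
      have h := (Real.hasDerivAt_sqrt hne).comp u hinner
      have : HasDerivAt φ (u / Real.sqrt (u ^ 2 + r ^ 2)) u := by
        refine h.congr_deriv ?_
        field_simp
      exact this.hasDerivWithinAt
    have hinj : Set.InjOn φ (Set.Ioi 0) := by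
      intro u hu v hv h
      have hu0 : (0:ℝ) < u := hu
      have hv0 : (0:ℝ) < v := hv
      have h1 : u ^ 2 + r ^ 2 = v ^ 2 + r ^ 2 := by
        have h2 := congrArg (fun t => t ^ 2) h
        simpa [hφ, Real.sq_sqrt (by positivity : (0:ℝ) ≤ u ^ 2 + r ^ 2),
          Real.sq_sqrt (by positivity : (0:ℝ) ≤ v ^ 2 + r ^ 2)] using h2
      nlinarith
    have hchg : (∫ τ in Set.Ioi r, deriv R τ / Real.sqrt (τ ^ 2 - r ^ 2))
        = ∫ u in Set.Ioi (0:ℝ), |u / Real.sqrt (u ^ 2 + r ^ 2)| •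
            (deriv R (φ u) / Real.sqrt (φ u ^ 2 - r ^ 2)) := by
      rw [← himg]
      exact integral_image_eq_integral_abs_deriv_smul measurableSet_Ioi hφ' hinj _
    have hpt : ∀ u ∈ Set.Ioi (0:ℝ), |u / Real.sqrt (u ^ 2 + r ^ 2)| •
          (deriv R (φ u) / Real.sqrt (φ u ^ 2 - r ^ 2))
        = (-2 * a * c * Real.exp (-a * r ^ 2)) * Real.exp (-a * u ^ 2) := by
      intro u hu
      have hu0 : (0:ℝ) < u := hu
      have hsq : φ u ^ 2 = u ^ 2 + r ^ 2 := Real.sq_sqrt (by positivity)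
      have hφpos : 0 < φ u := Real.sqrt_pos.mpr (by positivity)
      rw [hderiv, hsq]
      have h1 : Real.sqrt (u ^ 2 + r ^ 2 - r ^ 2) = u := by
        rw [add_sub_cancel_right, Real.sqrt_sq hu0.le]
      rw [h1, abs_of_nonneg (by positivity), smul_eq_mul]
      have hE : Real.exp (-a * (u ^ 2 + r ^ 2))
          = Real.exp (-a * r ^ 2) * Real.exp (-a * u ^ 2) := by
        rw [← Real.exp_add]; ring_nf
      rw [hE]
      have hφne : Real.sqrt (u ^ 2 + r ^ 2) ≠ 0 := ne_of_gt hφpos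
      field_simp
      ring
    rw [hchg, setIntegral_congr_fun measurableSet_Ioi hpt, integral_const_mul,
      integral_gaussian_Ioi, ← hc]
    have hcc : c * c = Real.pi / a := Real.mul_self_sqrt (by positivity)
    have hac : a * (c * c) = Real.pi := by
      rw [hcc]; field_simp
    have hπ : Real.pi ≠ 0 := Real.pi_ne_zero
    have hneg : Real.exp (-a * r ^ 2) = Real.exp (-(a * r ^ 2)) := by ring_nf
    rw [hneg]
    field_simp
    linear_combination hac
end

section
/- Let φ be a nonnegative continuous compactly supported function on ℝⁿ with ∫φ = 1, and φ_ε(x) = ε^{−n}φ(x/ε). Then for ε₁, ε₂ > 0, W¹_κ(φ_{ε₁}dx, φ_{ε₂}dx) ≤ κ·|ε₁ − ε₂|·∫|y|·φ(y) dy. -/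
open MeasureTheory

lemma moll_integral (n : ℕ) (φ ψ : EuclideanSpace ℝ (Fin n) → ℝ)
    {ε : ℝ} (hε : 0 < ε) :
    ∫ x, ψ x * (ε ^ (-(n : ℤ)) * φ (ε⁻¹ • x)) = ∫ y, ψ (ε • y) * φ y := by
  have h1 : ∫ x, (fun y => ψ (ε • y) * φ y) (ε⁻¹ • x)
      = (ε ^ Module.finrank ℝ (EuclideanSpace ℝ (Fin n))) • ∫ y, ψ (ε • y) * φ y :=
    Measure.integral_comp_inv_smul_of_nonneg volume (fun y => ψ (ε • y) * φ y) hε.le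
  have h2 : ∀ x : EuclideanSpace ℝ (Fin n),
      (fun y => ψ (ε • y) * φ y) (ε⁻¹ • x) = ψ x * φ (ε⁻¹ • x) := by
    intro x
    simp [smul_smul, mul_inv_cancel₀ hε.ne']
  simp_rw [h2] at h1
  have h3 : ∀ x : EuclideanSpace ℝ (Fin n),
      ψ x * (ε ^ (-(n : ℤ)) * φ (ε⁻¹ • x)) = ε ^ (-(n : ℤ)) * (ψ x * φ (ε⁻¹ • x)) := by
    intro x; ring
  simp_rw [h3]
  rw [integral_const_mul, h1, finrank_euclideanSpace_fin, smul_eq_mul, ← mul_assoc,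
    zpow_neg, zpow_natCast, inv_mul_cancel₀ (pow_ne_zero _ hε.ne'), one_mul]

theorem wasserstein_mollifier (n : ℕ) (φ : EuclideanSpace ℝ (Fin n) → ℝ)
    (hφ : Continuous φ) (hφ0 : ∀ x, 0 ≤ φ x) (hφc : HasCompactSupport φ)
    (hφ1 : ∫ x, φ x = 1) (κ : NNReal) (hκ : 0 < κ) (ε₁ ε₂ : ℝ) (hε₁ : 0 < ε₁) (hε₂ : 0 < ε₂) :
    sSup {r : ℝ | ∃ ψ : EuclideanSpace ℝ (Fin n) → ℝ,
        (∀ z, |ψ z| ≤ 1) ∧ LipschitzWith κ ψ ∧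
        r = ∫ x, ψ x * (ε₁ ^ (-(n : ℤ)) * φ (ε₁⁻¹ • x) - ε₂ ^ (-(n : ℤ)) * φ (ε₂⁻¹ • x))} ≤
      (κ : ℝ) * |ε₁ - ε₂| * ∫ y, ‖y‖ * φ y := by
  have hInt0 : Integrable (fun y : EuclideanSpace ℝ (Fin n) => ‖y‖ * φ y) :=
    Continuous.integrable_of_hasCompactSupport (by fun_prop) (hφc.mul_left)
  have hbound : 0 ≤ (κ : ℝ) * |ε₁ - ε₂| * ∫ y, ‖y‖ * φ y := by
    apply mul_nonneg (mul_nonneg κ.2 (abs_nonneg _))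
    exact integral_nonneg fun y => mul_nonneg (norm_nonneg _) (hφ0 y)
  apply Real.sSup_le _ hbound
  rintro r ⟨ψ, hψb, hψl, rfl⟩
  have hψc : Continuous ψ := hψl.continuous
  -- integrability of the two mollifier terms
  have hint : ∀ ε : ℝ, 0 < ε →
      Integrable (fun x => ψ x * (ε ^ (-(n : ℤ)) * φ (ε⁻¹ • x))) := by
    intro ε hε
    have hcs : HasCompactSupport (fun x : EuclideanSpace ℝ (Fin n) => φ (ε⁻¹ • x)) :=
      hφc.comp_homeomorph (Homeomorph.smulOfNeZero (ε⁻¹) (inv_ne_zero hε.ne'))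
    have hcs2 : HasCompactSupport
        (fun x => ψ x * (ε ^ (-(n : ℤ)) * φ (ε⁻¹ • x))) := by
      apply HasCompactSupport.mul_left
      exact HasCompactSupport.mul_left hcs
    exact Continuous.integrable_of_hasCompactSupport (by fun_prop) hcs2
  have hintc : ∀ ε : ℝ, Integrable (fun y : EuclideanSpace ℝ (Fin n) => ψ (ε • y) * φ y) := by
    intro ε
    exact Continuous.integrable_of_hasCompactSupport (by fun_prop) hφc.mul_left
  have hsplit : (∫ x, ψ x * (ε₁ ^ (-(n : ℤ)) * φ (ε₁⁻¹ • x) - ε₂ ^ (-(n : ℤ)) * φ (ε₂⁻¹ • x)))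
      = ∫ y, (ψ (ε₁ • y) - ψ (ε₂ • y)) * φ y := by
    have : ∀ x : EuclideanSpace ℝ (Fin n),
        ψ x * (ε₁ ^ (-(n : ℤ)) * φ (ε₁⁻¹ • x) - ε₂ ^ (-(n : ℤ)) * φ (ε₂⁻¹ • x))
        = ψ x * (ε₁ ^ (-(n : ℤ)) * φ (ε₁⁻¹ • x)) - ψ x * (ε₂ ^ (-(n : ℤ)) * φ (ε₂⁻¹ • x)) := by
      intro x; ring
    simp_rw [this, sub_mul]
    rw [integral_sub (hint ε₁ hε₁) (hint ε₂ hε₂),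
      moll_integral n φ ψ hε₁, moll_integral n φ ψ hε₂,
      integral_sub (hintc ε₁) (hintc ε₂)]
  rw [hsplit]
  have hmono : (∫ y, (ψ (ε₁ • y) - ψ (ε₂ • y)) * φ y)
      ≤ ∫ y, ((κ : ℝ) * |ε₁ - ε₂| * ‖y‖) * φ y := by
    have hI1 : Integrable (fun y : EuclideanSpace ℝ (Fin n) =>
        (ψ (ε₁ • y) - ψ (ε₂ • y)) * φ y) := by
      have := (hintc ε₁).sub (hintc ε₂)
      simpa [sub_mul, Pi.sub_def] using this
    have hI2 : Integrable (fun y : EuclideanSpace ℝ (Fin n) =>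
        ((κ : ℝ) * |ε₁ - ε₂| * ‖y‖) * φ y) := by
      have := hInt0.const_mul ((κ : ℝ) * |ε₁ - ε₂|)
      simpa [mul_assoc] using this
    apply integral_mono hI1 hI2
    intro y
    apply mul_le_mul_of_nonneg_right _ (hφ0 y)
    calc ψ (ε₁ • y) - ψ (ε₂ • y) ≤ |ψ (ε₁ • y) - ψ (ε₂ • y)| := le_abs_self _
      _ ≤ (κ : ℝ) * ‖ε₁ • y - ε₂ • y‖ := by
          have := hψl.dist_le_mul (ε₁ • y) (ε₂ • y)
          rwa [Real.dist_eq, dist_eq_norm] at this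
      _ = (κ : ℝ) * (|ε₁ - ε₂| * ‖y‖) := by
          rw [← sub_smul, norm_smul, Real.norm_eq_abs]
      _ = (κ : ℝ) * |ε₁ - ε₂| * ‖y‖ := by ring
  refine hmono.trans_eq ?_
  simp_rw [mul_assoc]
  rw [integral_const_mul, integral_const_mul]
end

section
/- Let λ : ℝ → ℝ be continuous. The function u(x,θ) = ∫₀^∞ exp(−∫₀^t λ(x−rθ)dr)·f(x − tθ, θ) dt, for f continuous, compactly supported in x, solves the ballistic transport equation θ·∇_x u + λ·u = f along lines: for every x, θ, the function t ↦ u(x + tθ, θ) is differentiable with derivative f(x+tθ,θ) − λ(x+tθ)·u(x+tθ,θ). -/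
open MeasureTheory

theorem ballistic_transport (n : ℕ) (hn : 1 ≤ n) (θ : EuclideanSpace ℝ (Fin n))
    (hθ : ‖θ‖ = 1) (lam : EuclideanSpace ℝ (Fin n) → ℝ) (hlam : Continuous lam)
    (hlam_bdd : ∃ M, ∀ x, |lam x| ≤ M)
    (f : EuclideanSpace ℝ (Fin n) → ℝ) (hf : Continuous f) (hfc : HasCompactSupport f)
    (u : EuclideanSpace ℝ (Fin n) → ℝ)
    (hu : ∀ x, u x = ∫ t in Set.Ioi (0:ℝ),
        Real.exp (-∫ r in (0:ℝ)..t, lam (x - r • θ)) * f (x - t • θ)) :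
    ∀ x : EuclideanSpace ℝ (Fin n), ∀ t : ℝ,
      HasDerivAt (fun τ : ℝ => u (x + τ • θ))
        (f (x + t • θ) - lam (x + t • θ) * u (x + t • θ)) t := by
  intro x t
  set L : ℝ → ℝ := fun s => lam (x + s • θ) with hLdef
  set G : ℝ → ℝ := fun s => f (x + s • θ) with hGdef
  have hline : Continuous (fun s : ℝ => x + s • θ) := by continuity
  have hLc : Continuous L := hlam.comp hline
  have hGc : Continuous G := hf.comp hline
  -- G has compact support
  obtain ⟨R, hR⟩ := hfc.isBounded.subset_closedBall 0
  have hGsupp : HasCompactSupport G := by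
    apply HasCompactSupport.intro (isCompact_Icc (a := -(R + ‖x‖)) (b := R + ‖x‖))
    intro s hs
    by_contra hGs
    have hmem : x + s • θ ∈ tsupport f := subset_tsupport f hGs
    have := hR hmem
    rw [Metric.mem_closedBall, dist_zero_right] at this
    have hnorm : |s| ≤ R + ‖x‖ := by
      have h1 : ‖s • θ‖ = |s| := by rw [norm_smul, hθ, Real.norm_eq_abs, mul_one]
      have h2 : ‖s • θ‖ ≤ ‖x + s • θ‖ + ‖x‖ := by
        have h3 := norm_sub_le (x + s • θ) x
        simpa using h3
      rw [← h1]; linarith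
    exact hs ⟨(abs_le.mp hnorm).1, (abs_le.mp hnorm).2⟩
  set Lam : ℝ → ℝ := fun τ => ∫ r in (0:ℝ)..τ, L r with hLamdef
  have hLint : ∀ a b : ℝ, IntervalIntegrable L volume a b := fun a b =>
    hLc.intervalIntegrable a b
  have hLamD : ∀ τ : ℝ, HasDerivAt Lam (L τ) τ := fun τ =>
    intervalIntegral.integral_hasDerivAt_right (hLint 0 τ)
      hLc.aestronglyMeasurable.stronglyMeasurableAtFilter hLc.continuousAt
  have hLamc : Continuous Lam := by
    apply continuous_iff_continuousAt.mpr
    exact fun τ => (hLamD τ).continuousAt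
  set φ : ℝ → ℝ := fun s => Real.exp (Lam s) * G s with hφdef
  have hφc : Continuous φ := (Real.continuous_exp.comp hLamc).mul hGc
  have hφsupp : HasCompactSupport φ := hGsupp.mul_left
  have hφint : Integrable φ := hφc.integrable_of_hasCompactSupport hφsupp
  set F : ℝ → ℝ := fun τ => ∫ s in Set.Iio τ, φ s with hFdef
  -- key identity
  have key : ∀ τ : ℝ, u (x + τ • θ) = Real.exp (-Lam τ) * F τ := by
    intro τ
    rw [hu]
    have step1 : ∀ s : ℝ, (x + τ • θ) - s • θ = x + (τ - s) • θ := by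
      intro s; rw [sub_smul]; abel
    have step2 : ∀ s : ℝ, (∫ r in (0:ℝ)..s, lam ((x + τ • θ) - r • θ)) =
        Lam τ - Lam (τ - s) := by
      intro s
      have : (∫ r in (0:ℝ)..s, lam ((x + τ • θ) - r • θ)) = ∫ r in (0:ℝ)..s, L (τ - r) := by
        apply intervalIntegral.integral_congr
        intro r _; simp only [hLdef, step1 r]
      rw [this, intervalIntegral.integral_comp_sub_left L τ, sub_zero,
        ← intervalIntegral.integral_interval_sub_left (hLint 0 τ) (hLint 0 (τ - s))]
    have step3 : (∫ s in Set.Ioi (0:ℝ),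
        Real.exp (-∫ r in (0:ℝ)..s, lam ((x + τ • θ) - r • θ)) * f ((x + τ • θ) - s • θ)) =
        ∫ s in Set.Ioi (0:ℝ), Real.exp (-Lam τ) * φ (τ - s) := by
      apply setIntegral_congr_fun measurableSet_Ioi
      intro s _
      show Real.exp (-∫ r in (0:ℝ)..s, lam ((x + τ • θ) - r • θ)) * f ((x + τ • θ) - s • θ) =
        Real.exp (-Lam τ) * φ (τ - s)
      rw [step2 s, step1 s]
      show Real.exp (-(Lam τ - Lam (τ - s))) * G (τ - s) = Real.exp (-Lam τ) * φ (τ - s)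
      simp only [hφdef]
      rw [neg_sub, sub_eq_add_neg, Real.exp_add]
      ring
    have sub : (∫ s in Set.Ioi (0:ℝ), φ (τ - s)) = ∫ s in Set.Iio τ, φ s := by
      rw [← integral_indicator measurableSet_Ioi, ← integral_indicator measurableSet_Iio]
      have hind : (fun s : ℝ => (Set.Ioi (0:ℝ)).indicator (fun s => φ (τ - s)) s) =
          fun s => (Set.Iio τ).indicator φ (τ - s) := by
        funext s
        by_cases h : 0 < s
        · rw [Set.indicator_of_mem (Set.mem_Ioi.mpr h),
            Set.indicator_of_mem (Set.mem_Iio.mpr (by linarith))]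
        · rw [Set.indicator_of_notMem (by simpa using h),
            Set.indicator_of_notMem
              (by simp only [Set.mem_Iio, not_lt]; linarith [not_lt.mp h])]
      rw [hind]
      exact integral_sub_left_eq_self ((Set.Iio τ).indicator φ) volume τ
    rw [step3, integral_const_mul, sub]
  -- derivative of F
  have hFD : HasDerivAt F (φ t) t := by
    have heq : ∀ τ : ℝ, F τ = (∫ s in Set.Iio (0:ℝ), φ s) + ∫ s in (0:ℝ)..τ, φ s := by
      intro τ
      rw [hFdef]
      have h1 : (∫ s in (0:ℝ)..τ, φ s) = (∫ s in Set.Iic τ, φ s) - ∫ s in Set.Iic (0:ℝ), φ s :=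
        (intervalIntegral.integral_Iic_sub_Iic hφint.integrableOn hφint.integrableOn).symm
      simp only [h1, ← integral_Iic_eq_integral_Iio]
      ring
    rw [funext heq]
    exact ((intervalIntegral.integral_hasDerivAt_right (hφc.intervalIntegrable 0 t)
      hφc.aestronglyMeasurable.stronglyMeasurableAtFilter hφc.continuousAt).const_add _)
  -- derivative of exp(-Lam)
  have hED : HasDerivAt (fun τ => Real.exp (-Lam τ)) (-L t * Real.exp (-Lam t)) t := by
    have := ((hLamD t).neg).exp
    simpa [mul_comm] using this
  have hprod : HasDerivAt (fun τ => Real.exp (-Lam τ) * F τ)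
      (-L t * Real.exp (-Lam t) * F t + Real.exp (-Lam t) * φ t) t := hED.mul hFD
  have hfinal : HasDerivAt (fun τ => Real.exp (-Lam τ) * F τ)
      (G t - L t * (Real.exp (-Lam t) * F t)) t := by
    convert hprod using 1
    show G t - L t * (Real.exp (-Lam t) * F t) = -L t * Real.exp (-Lam t) * F t + Real.exp (-Lam t) * (Real.exp (Lam t) * G t)
    have h1 : Real.exp (-Lam t) * Real.exp (Lam t) = 1 := by
      rw [← Real.exp_add, neg_add_cancel, Real.exp_zero]
    linear_combination (-G t) * h1
  have : (fun τ : ℝ => u (x + τ • θ)) = fun τ => Real.exp (-Lam τ) * F τ := funext key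
  rw [this, key t]
  exact hfinal
end
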